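/- Let Q be a real number with Q > 1/2 + Σ_{i=1}^k q_i, and let (w, w_0) be a fixed strategy of Player W. If there exists a subset I ⊆ {1, …, k} with Σ_{i∈I} q_i = w, then every maximizer (z, z_0, z_1, …, z_k) of Player Z's payoff Π_Z over X_Z satisfies z_0 = 0 (and moreover z = w and Σ_{i=1}^k q_i·z_i = w). -/
import Mathlib


open MeasureTheory

noncomputable section

/-- Player Z's strategy set `X_Z`: tuples `(z, z₀, (z₁,…,z_k))` with
`R ≤ z ≤ R + 2^r − 1`, each `zᵢ ∈ {0,1}`, and `(1/2)·z₀ + Σᵢ qᵢ·zᵢ ≤ z`. -/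
def inXZ (k : ℕ) (q : Fin k → ℕ) (R r : ℕ) (s : ℤ × ℤ × (Fin k → ℤ)) : Prop :=
  (R : ℤ) ≤ s.1 ∧ s.1 ≤ (R : ℤ) + 2 ^ r - 1 ∧
  (s.2.1 = 0 ∨ s.2.1 = 1) ∧ (∀ i, s.2.2 i = 0 ∨ s.2.2 i = 1) ∧
  (1 / 2 : ℝ) * (s.2.1 : ℝ) + ∑ i, (q i : ℝ) * (s.2.2 i : ℝ) ≤ (s.1 : ℝ)

/-- Player W's strategy set `X_W`: pairs `(w, w₀)` with `R ≤ w ≤ R + 2^r − 1`,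
`w` an integer and `w₀` an arbitrary real number. -/
def inXW (R r : ℕ) (t : ℤ × ℝ) : Prop :=
  (R : ℤ) ≤ t.1 ∧ t.1 ≤ (R : ℤ) + 2 ^ r - 1

/-- Player Z's payoff `Π_Z = (1/2)·z₀ + Σᵢ qᵢ·zᵢ + Q·z·(2w − z)`. -/
def payZ (k : ℕ) (q : Fin k → ℕ) (Q : ℝ) (s : ℤ × ℤ × (Fin k → ℤ)) (t : ℤ × ℝ) : ℝ :=
  (1 / 2 : ℝ) * (s.2.1 : ℝ) + ∑ i, (q i : ℝ) * (s.2.2 i : ℝ)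
    + Q * (s.1 : ℝ) * (2 * (t.1 : ℝ) - (s.1 : ℝ))

/-- Player W's payoff `Π_W = (1 − z₀)·w₀`. -/
def payW (k : ℕ) (s : ℤ × ℤ × (Fin k → ℤ)) (t : ℤ × ℝ) : ℝ :=
  (1 - (s.2.1 : ℝ)) * t.2

/-- if some subset of the `qᵢ` sums to `w`, every maximizer of
Player Z's payoff over `X_Z` has `z₀ = 0`, `z = w` and `Σᵢ qᵢ·zᵢ = w`. -/
theorem stmt1 (k : ℕ) (q : Fin k → ℕ) (R r : ℕ) (Q : ℝ)
    (hq : ∀ i, 0 < q i) (hR : 0 < R) (hr : 0 < r) (hrk : r ≤ k)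
    (hQ : Q > 1 / 2 + ∑ i, (q i : ℝ))
    (t : ℤ × ℝ) (ht : inXW R r t)
    (hI : ∃ I : Finset (Fin k), (∑ i ∈ I, (q i : ℤ)) = t.1)
    (s : ℤ × ℤ × (Fin k → ℤ)) (hs : inXZ k q R r s)
    (hmax : ∀ s' : ℤ × ℤ × (Fin k → ℤ), inXZ k q R r s' →
      payZ k q Q s' t ≤ payZ k q Q s t) :
    s.2.1 = 0 ∧ s.1 = t.1 ∧ (∑ i, (q i : ℤ) * s.2.2 i) = t.1 := by
  obtain ⟨I, hIsum⟩ := hI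
  obtain ⟨hz1, hz2, hz0, hzv, hcon⟩ := hs
  obtain ⟨hw1, hw2⟩ := ht
  -- the indicator sum equals t.1
  have hindsum : ∑ i, (q i : ℝ) * ((if i ∈ I then (1:ℤ) else 0 : ℤ) : ℝ) = (t.1 : ℝ) := by
    rw [← hIsum]
    push_cast
    simp [mul_ite, Finset.sum_ite_mem]
  -- candidate strategy
  have hcand : inXZ k q R r (t.1, 0, fun i => if i ∈ I then 1 else 0) := by
    refine ⟨hw1, hw2, Or.inl rfl, fun i => by by_cases h : i ∈ I <;> simp [h], ?_⟩
    show (1/2 : ℝ) * ((0:ℤ):ℝ) + ∑ i, (q i : ℝ) * ((if i ∈ I then (1:ℤ) else 0 : ℤ) : ℝ)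
        ≤ (t.1 : ℝ)
    rw [hindsum]
    norm_num
  have hineq := hmax _ hcand
  simp only [payZ] at hineq
  rw [hindsum] at hineq
  push_cast at hineq
  have hz0le : (s.2.1 : ℝ) ≤ 1 := by rcases hz0 with h | h <;> simp [h]
  have hz0ge : (0:ℝ) ≤ (s.2.1 : ℝ) := by rcases hz0 with h | h <;> simp [h]
  have hSle : ∑ i, (q i : ℝ) * (s.2.2 i : ℝ) ≤ ∑ i, (q i : ℝ) := by
    apply Finset.sum_le_sum
    intro i _
    rcases hzv i with h | h <;> simp [h]
  have hAQ : (1/2 : ℝ) * (s.2.1 : ℝ) + ∑ i, (q i : ℝ) * (s.2.2 i : ℝ) < Q := by nlinarith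
  have hQpos : 0 < Q := by
    have : (0:ℝ) ≤ ∑ i, (q i : ℝ) := Finset.sum_nonneg (fun i _ => by positivity)
    linarith
  have hW1 : (1:ℝ) ≤ (t.1 : ℝ) := by
    have : (1:ℤ) ≤ t.1 := le_trans (by exact_mod_cast hR) hw1
    exact_mod_cast this
  -- prove z = w
  have hzw : s.1 = t.1 := by
    by_contra h
    have h2 : s.1 - t.1 ≠ 0 := sub_ne_zero.mpr h
    have h3 : (1:ℤ) ≤ |s.1 - t.1| := Int.one_le_abs h2
    have h4 : (1:ℤ) ≤ (s.1 - t.1)^2 := by nlinarith [sq_abs (s.1 - t.1)]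
    have h5 : (1:ℝ) ≤ ((s.1 : ℝ) - (t.1 : ℝ))^2 := by exact_mod_cast h4
    nlinarith [hineq]
  have hZW : (s.1 : ℝ) = (t.1 : ℝ) := by exact_mod_cast hzw
  rw [hZW] at hineq hcon
  have hAgeW : (t.1 : ℝ) ≤ (1/2 : ℝ) * (s.2.1 : ℝ) + ∑ i, (q i : ℝ) * (s.2.2 i : ℝ) := by
    nlinarith [hineq]
  have hAeq : (1/2 : ℝ) * (s.2.1 : ℝ) + ∑ i, (q i : ℝ) * (s.2.2 i : ℝ) = (t.1 : ℝ) :=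
    le_antisymm hcon hAgeW
  have hSB : ∑ i, (q i : ℝ) * (s.2.2 i : ℝ) = ((∑ i, (q i : ℤ) * s.2.2 i : ℤ) : ℝ) := by
    push_cast; ring
  rw [hSB] at hAeq
  rcases hz0 with h0 | h0
  · refine ⟨h0, hzw, ?_⟩
    rw [h0] at hAeq
    simp at hAeq
    exact_mod_cast hAeq
  · exfalso
    rw [h0] at hAeq
    have h6 : ((2 * (∑ i, (q i : ℤ) * s.2.2 i) + 1 : ℤ) : ℝ) = ((2 * t.1 : ℤ) : ℝ) := by
      push_cast at hAeq ⊢; linarith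
    have := (Int.cast_injective (α := ℝ)) h6
    omega
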